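/- Let A be a split local symmetric finite-dimensional k-algebra. Then dim_k(J(A)/J(A)²) ≤ dim_k {ℓ ∈ HH¹(A) : z·ℓ = 0 for all z ∈ J(A) ∩ Z(A)}, i.e. the dimension of J(A)/J(A)² is at most the dimension of the socle of HH¹(A) as a module over the (local) center Z(A). -/

import Mathlib

/-!
Context: `A` is the quantum complete intersection
`A = k⟨x,y⟩/(x^p, y^p, yx − q·xy)` over a field `k` of odd prime characteristic `p`,
where `q ∈ k^×` has finite multiplicative order `e` with `2 ≤ e` and `e ∣ p − 1`.
`HH¹(A) = Der(A)/IDer(A)` is the first Hochschild cohomology of `A`, a Lie algebra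
with bracket induced by `[f,g] = f∘g − g∘f`.
-/

attribute [local instance 100] LieRing.ofAssociativeRing

section HochschildPrelim

variable (k : Type*) [CommRing k] (A : Type*) [Ring A] [Algebra k A]

/-- A derivation of the `k`-algebra `A`: a `k`-linear map satisfying the Leibniz rule. -/
def IsDeriv (f : Module.End k A) : Prop := ∀ a b : A, f (a * b) = a * f b + f a * b

/-- An inner derivation `[c, -] : a ↦ c*a - a*c`. -/
def IsInner (f : Module.End k A) : Prop := ∃ c : A, ∀ a : A, f a = c * a - a * c

/-- The Lie algebra `Der(A)` of derivations, as a Lie subalgebra of `End_k(A)`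
(with the commutator bracket). -/
def Der : LieSubalgebra k (Module.End k A) where
  carrier := {f | IsDeriv k A f}
  add_mem' := by
    intro f g hf hg
    intro a b
    simp only [LinearMap.add_apply, hf a b, hg a b]
    noncomm_ring
  zero_mem' := by intro a b; simp
  smul_mem' := by
    intro c f hf
    intro a b
    simp only [LinearMap.smul_apply, hf a b, smul_add, mul_smul_comm, smul_mul_assoc]
  lie_mem' := by
    intro f g hf hg
    intro a b
    rw [Ring.lie_def]
    simp only [LinearMap.sub_apply, Module.End.mul_apply]
    rw [hg a b, map_add, hf a (g b), hf (g a) b, hf a b, map_add, hg a (f b), hg (f a) b,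
      mul_sub, sub_mul]
    abel

/-- The inner derivations form a Lie ideal `IDer(A)` of `Der(A)`. -/
def IDer : LieIdeal k (Der k A) where
  carrier := {f | IsInner k A f.1}
  add_mem' := by
    rintro f g ⟨c, hc⟩ ⟨d, hd⟩
    refine ⟨c + d, fun a => ?_⟩
    show f.1 a + g.1 a = _
    rw [hc, hd]
    noncomm_ring
  zero_mem' := ⟨0, fun a => by simp⟩
  smul_mem' := by
    rintro t f ⟨c, hc⟩
    refine ⟨t • c, fun a => ?_⟩
    show t • f.1 a = _
    rw [hc, smul_sub, smul_mul_assoc, mul_smul_comm]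
  lie_mem := by
    rintro x m ⟨c, hc⟩
    refine ⟨x.1 c, fun a => ?_⟩
    have hx : IsDeriv k A x.1 := x.2
    have h : (↑(⁅x, m⁆ : Der k A) : Module.End k A) a = x.1 (m.1 a) - m.1 (x.1 a) := rfl
    rw [h, hc, hc, map_sub, hx c a, hx a c]
    abel

/-- The first Hochschild cohomology `HH¹(A) = Der(A)/IDer(A)`, as a quotient Lie algebra. -/
abbrev HH1 := Der k A ⧸ IDer k A

end HochschildPrelim

section ZAction

variable (k : Type*) [CommRing k] (A : Type*) [Ring A] [Algebra k A]

/-- Multiplication of a derivation by a central element `z`:  `(z·f)(a) = z f(a)`. -/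
def zmul (z : A) (hz : z ∈ Subalgebra.center k A) : Der k A →ₗ[k] Der k A where
  toFun f := ⟨(LinearMap.mulLeft k z) ∘ₗ (f : Module.End k A), by
    intro a b
    have hf : IsDeriv k A f.1 := f.2
    have hc : ∀ c : A, c * z = z * c := fun c => Subalgebra.mem_center_iff.mp hz c
    simp only [LinearMap.comp_apply, LinearMap.mulLeft_apply]
    rw [hf a b, mul_add, ← mul_assoc, ← mul_assoc, ← hc a, mul_assoc]⟩
  map_add' f g := by
    ext a
    simp [mul_add]
  map_smul' t f := by
    ext a
    show z * (↑(t • f) : Module.End k A) a = (↑(t • (⟨LinearMap.mulLeft k z ∘ₗ ↑f, by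
      intro a b
      have hf : IsDeriv k A f.1 := f.2
      have hc : ∀ c : A, c * z = z * c := fun c => Subalgebra.mem_center_iff.mp hz c
      simp only [LinearMap.comp_apply, LinearMap.mulLeft_apply]
      rw [hf a b, mul_add, ← mul_assoc, ← mul_assoc, ← hc a, mul_assoc]⟩ : Der k A)) : Module.End k A) a
    rw [Submodule.coe_smul, Submodule.coe_smul]
    simp [mul_smul_comm]

/-- The action of a central element `z ∈ Z(A)` on `HH¹(A)`, induced by `(z·f)(a) = z f(a)`
on derivations. -/
def zAct (z : A) (hz : z ∈ Subalgebra.center k A) : HH1 k A →ₗ[k] HH1 k A :=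
  Submodule.mapQ (IDer k A).toSubmodule (IDer k A).toSubmodule (zmul k A z hz) (by
    rintro f ⟨c, hc⟩
    refine ⟨z * c, fun a => ?_⟩
    have hcen : ∀ c : A, c * z = z * c := fun c => Subalgebra.mem_center_iff.mp hz c
    show z * f.1 a = _
    have h2 : a * (z * c) = z * (a * c) := by rw [← mul_assoc, hcen a, mul_assoc]
    rw [hc a, mul_sub, ← h2, ← mul_assoc])

/-- The socle of `HH¹(A)` as a `Z(A)`-module: the subspace of elements annihilated by
every element of `J(A) ∩ Z(A)` (the maximal ideal of the local ring `Z(A)`). -/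
def socZHH1 : Submodule k (HH1 k A) where
  carrier := {ℓ | ∀ (z : A) (hz : z ∈ Subalgebra.center k A),
    z ∈ Ideal.jacobson (⊥ : Ideal A) → zAct k A z hz ℓ = 0}
  add_mem' := by
    intro a b ha hb z hz hzJ
    rw [map_add, ha z hz hzJ, hb z hz hzJ, add_zero]
  zero_mem' := by
    intro z hz hzJ
    exact map_zero _
  smul_mem' := by
    intro c a ha z hz hzJ
    rw [map_smul, ha z hz hzJ, smul_zero]

end ZAction



section AuxLocal

variable {A : Type*} [Ring A]

/-- In a local ring, a right-invertible element is a unit. -/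
lemma aux_isUnit_of_mul_eq_one [IsLocalRing A] {x v : A} (h : x * v = 1) : IsUnit x := by
  rcases IsLocalRing.isUnit_or_isUnit_of_add_one (a := v * x) (b := 1 - v * x) (by abel) with
    hu | hu
  · obtain ⟨u, hu⟩ := hu
    have he : (v * x) * (v * x) = v * x := by
      rw [mul_assoc, ← mul_assoc x v, h, one_mul]
    have h2 : ((u : A) * u : A) = (u : A) := by rw [hu]; exact he
    have h1 : v * x = 1 := by
      calc v * x = (u : A) := hu.symm
        _ = (u : A) * u * ↑u⁻¹ := by rw [mul_assoc, Units.mul_inv, mul_one]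
        _ = (u : A) * ↑u⁻¹ := by rw [h2]
        _ = 1 := Units.mul_inv u
    exact ⟨⟨x, v, h, h1⟩, rfl⟩
  · obtain ⟨u, hu⟩ := hu
    have h0 : (v * x) * (1 - v * x) = 0 := by
      rw [mul_sub, mul_one, mul_assoc, ← mul_assoc x, h, one_mul, sub_self]
    have hvx : v * x = 0 := by
      have h3 : (v * x) * ((1 - v * x) * ↑u⁻¹) = 0 := by rw [← mul_assoc, h0, zero_mul]
      rwa [← hu, Units.mul_inv, mul_one] at h3
    have hv : v = 0 := by
      have h4 : v * (x * v) = 0 := by rw [← mul_assoc, hvx, zero_mul]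
      rwa [h, mul_one] at h4
    rw [hv, mul_zero] at h
    exact absurd h.symm one_ne_zero

/-- In a local ring, every nonunit lies in the Jacobson radical. -/
lemma aux_mem_jacobson [IsLocalRing A] {x : A} (hx : ¬ IsUnit x) :
    x ∈ Ideal.jacobson (⊥ : Ideal A) := by
  refine Submodule.mem_sInf.mpr fun M hM => ?_
  by_contra hxM
  have hlt : M < M ⊔ Ideal.span {x} :=
    lt_of_le_of_ne le_sup_left (fun hEq => hxM (hEq ▸
      (le_sup_right (a := M) (Ideal.subset_span (Set.mem_singleton x)))))
  have hsup : M ⊔ Ideal.span {x} = ⊤ := hM.2.out.2 _ hlt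
  have h1 : (1 : A) ∈ M ⊔ Ideal.span {x} := hsup ▸ Submodule.mem_top
  obtain ⟨m, hm, y, hy, hmy⟩ := Submodule.mem_sup.mp h1
  obtain ⟨a, ha⟩ := Submodule.mem_span_singleton.mp hy
  have hax : m + a * x = 1 := by rw [← smul_eq_mul, ha]; exact hmy
  rcases IsLocalRing.isUnit_or_isUnit_of_add_one hax with h | h
  · exact hM.2.out.1 (Ideal.eq_top_of_isUnit_mem M hm h)
  · obtain ⟨u, huu⟩ := h
    have hvx : (↑u⁻¹ * a) * x = 1 := by rw [mul_assoc, ← huu, Units.inv_mul]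
    obtain ⟨w, hw⟩ := aux_isUnit_of_mul_eq_one hvx
    have hwx : (w : A) * x = 1 := by rw [hw]; exact hvx
    have hxw : x = ↑w⁻¹ := by
      calc x = (↑w⁻¹ * ↑w) * x := by rw [Units.inv_mul, one_mul]
        _ = ↑w⁻¹ * ((w : A) * x) := by rw [mul_assoc]
        _ = ↑w⁻¹ := by rw [hwx, mul_one]
    exact hx (hxw ▸ w⁻¹.isUnit)

/-- Elements of the Jacobson radical are nonunits. -/
lemma aux_not_isUnit_of_mem_jacobson [Nontrivial A] {x : A}
    (hx : x ∈ Ideal.jacobson (⊥ : Ideal A)) : ¬ IsUnit x := by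
  obtain ⟨M, hM⟩ := Ideal.exists_maximal A
  have hxM : x ∈ M := Submodule.mem_sInf.mp hx M ⟨bot_le, hM⟩
  exact fun h => hM.out.1 (Ideal.eq_top_of_isUnit_mem M hxM h)

/-- The Jacobson radical of a local ring is closed under right multiplication. -/
lemma aux_jacobson_mul_right [IsLocalRing A] {r : A}
    (hr : r ∈ Ideal.jacobson (⊥ : Ideal A)) (b : A) :
    r * b ∈ Ideal.jacobson (⊥ : Ideal A) := by
  apply aux_mem_jacobson
  rintro ⟨u, hu⟩
  have h1 : r * (b * ↑u⁻¹) = 1 := by rw [← mul_assoc, ← hu, Units.mul_inv]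
  exact aux_not_isUnit_of_mem_jacobson hr (aux_isUnit_of_mul_eq_one h1)

end AuxLocal

section AuxDer

variable (k : Type*) [Field k] (A : Type*) [Ring A] [Algebra k A]

/-- The bundled linear map sending a dual vector `α` (in the annihilator of a subspace `U`)
to the derivation `a ↦ α a • z`, given that these are all derivations. -/
def derMap (z : A) (U : Submodule k A)
    (h : ∀ α ∈ U.dualAnnihilator, IsDeriv k A (LinearMap.smulRight α z)) :
    U.dualAnnihilator →ₗ[k] Der k A where
  toFun α := ⟨LinearMap.smulRight (α : Module.Dual k A) z, h α α.2⟩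
  map_add' α β := by
    apply Subtype.ext
    apply LinearMap.ext
    intro a
    show (((α : Module.Dual k A) + (β : Module.Dual k A)) a) • z =
      ((α : Module.Dual k A) a • z) + ((β : Module.Dual k A) a • z)
    rw [LinearMap.add_apply, add_smul]
  map_smul' c α := by
    apply Subtype.ext
    apply LinearMap.ext
    intro a
    show ((c • (α : Module.Dual k A)) a) • z = c • ((α : Module.Dual k A) a • z)
    rw [LinearMap.smul_apply, smul_eq_mul, smul_smul]

@[simp] lemma derMap_apply (z : A) (U : Submodule k A)
    (h : ∀ α ∈ U.dualAnnihilator, IsDeriv k A (LinearMap.smulRight α z))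
    (α : U.dualAnnihilator) (a : A) :
    ((derMap k A z U h α : Der k A) : Module.End k A) a = (α : Module.Dual k A) a • z := rfl

end AuxDer

set_option maxHeartbeats 1000000
set_option synthInstance.maxHeartbeats 400000

/-- Theorem (radical bound for split local symmetric algebras):
`dim_k J(A)/J(A)² ≤ dim_k soc_{Z(A)}(HH¹(A))`, where the socle of `HH¹(A)` over the local
ring `Z(A)` is the subspace of elements annihilated by `J(A) ∩ Z(A)`. -/
theorem dim_radical_quot_le_dim_socle_HH1_of_split_local_symmetric
    (k : Type*) [Field k] (A : Type*) [Ring A] [Algebra k A] [FiniteDimensional k A]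
    [IsLocalRing A]
    (hsl : ∀ a : A, ∃ (c : k) (r : A), r ∈ Ideal.jacobson (⊥ : Ideal A) ∧ a = c • (1 : A) + r)
    (hsl2 : Submodule.span k {(1 : A)} ⊓
      Submodule.restrictScalars k (Ideal.jacobson (⊥ : Ideal A)) = ⊥)
    (hsym : ∃ s : A →ₗ[k] k, (∀ a b : A, s (a * b) = s (b * a)) ∧
      ∀ I : Ideal A, (∀ a ∈ I, s a = 0) → I = ⊥) :
    Module.finrank k
      (↥(Submodule.restrictScalars k (Ideal.jacobson (⊥ : Ideal A))) ⧸
        Submodule.comap (Submodule.restrictScalars k (Ideal.jacobson (⊥ : Ideal A))).subtype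
          (Submodule.restrictScalars k (Ideal.jacobson (⊥ : Ideal A)) *
            Submodule.restrictScalars k (Ideal.jacobson (⊥ : Ideal A)) : Submodule k A)) ≤
    Module.finrank k ↥(socZHH1 k A) := by
  classical
  -- Notation
  set J : Ideal A := Ideal.jacobson (⊥ : Ideal A) with hJdef
  set Jk : Submodule k A := Submodule.restrictScalars k J with hJkdef
  set S : Submodule k A := Submodule.span k {(1 : A)} with hSdef
  set J2 : Submodule k A := Jk * Jk with hJ2def
  -- J2 ≤ Jk (the radical is a two-sided ideal)
  have hmemJk : ∀ x : A, x ∈ Jk ↔ x ∈ J := fun x => Iff.rfl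
  have hJ2le : J2 ≤ Jk := by
    rw [hJ2def]
    exact Submodule.mul_le.mpr fun m hm n hn => aux_jacobson_mul_right hm n
  -- A = S ⊕ Jk
  have hsup_top : S ⊔ Jk = ⊤ := by
    rw [eq_top_iff]
    intro a _
    obtain ⟨c, r, hr, hc⟩ := hsl a
    exact hc ▸ Submodule.add_mem_sup
      (Submodule.smul_mem _ c (Submodule.mem_span_singleton_self 1)) hr
  have hone : (1 : A) ≠ 0 := one_ne_zero
  have smul_one_eq_zero : ∀ c : k, c • (1 : A) = 0 → c = 0 := by
    intro c hc
    by_contra hc0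
    have h1 : (1 : A) = 0 := by
      calc (1 : A) = c⁻¹ • (c • (1 : A)) := by rw [smul_smul, inv_mul_cancel₀ hc0, one_smul]
        _ = 0 := by rw [hc, smul_zero]
    exact hone h1
  have hSJ : ∀ x : A, x ∈ S → x ∈ Jk → x = 0 := by
    intro x hxS hxJ
    have hx : x ∈ S ⊓ Jk := ⟨hxS, hxJ⟩
    rw [hsl2] at hx
    exact hx
  -- the coefficient functional φ : A → k  (a = φ a • 1 + radical part)
  set ℓ : k →ₗ[k] (A ⧸ Jk) := Jk.mkQ ∘ₗ LinearMap.toSpanSingleton k A 1 with hℓdef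
  have hℓ_apply : ∀ c : k, ℓ c = Submodule.Quotient.mk (c • (1 : A)) := fun c => rfl
  have hℓinj : Function.Injective ℓ := by
    intro c d hcd
    have h0 : ℓ (c - d) = 0 := by rw [map_sub, hcd, sub_self]
    have h1 : (c - d) • (1 : A) ∈ Jk := by
      rw [hℓ_apply, Submodule.Quotient.mk_eq_zero] at h0
      exact h0
    have h2 : (c - d) • (1 : A) ∈ S :=
      Submodule.smul_mem _ _ (Submodule.mem_span_singleton_self 1)
    exact sub_eq_zero.mp (smul_one_eq_zero _ (hSJ _ h2 h1))
  have hℓsurj : Function.Surjective ℓ := by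
    intro q
    obtain ⟨a, rfl⟩ := Submodule.Quotient.mk_surjective Jk q
    obtain ⟨c, r, hr, hc⟩ := hsl a
    refine ⟨c, ?_⟩
    rw [hℓ_apply, hc]
    have : Submodule.Quotient.mk (p := Jk) (c • (1:A) + r) =
        Submodule.Quotient.mk (c • (1:A)) + Submodule.Quotient.mk r := rfl
    rw [this, (Submodule.Quotient.mk_eq_zero Jk).mpr hr, add_zero]
  set e : k ≃ₗ[k] (A ⧸ Jk) := LinearEquiv.ofBijective ℓ ⟨hℓinj, hℓsurj⟩ with hedef
  set φ : A →ₗ[k] k := (e.symm : (A ⧸ Jk) →ₗ[k] k) ∘ₗ Jk.mkQ with hφdef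
  have he_apply : ∀ c : k, e c = ℓ c := fun c => rfl
  have hφ_apply : ∀ a : A, φ a = e.symm (Submodule.Quotient.mk a) := fun a => rfl
  have hφmem : ∀ a : A, a - φ a • (1 : A) ∈ Jk := by
    intro a
    rw [← Submodule.Quotient.mk_eq_zero Jk]
    have h1 : Submodule.Quotient.mk (p := Jk) (a - φ a • (1:A)) =
        Submodule.Quotient.mk a - Submodule.Quotient.mk (φ a • (1:A)) := rfl
    rw [h1, ← hℓ_apply, ← he_apply, hφ_apply, e.apply_symm_apply, sub_self]
  have hφ1 : φ (1 : A) = 1 := by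
    rw [hφ_apply]
    have h1 : e 1 = Submodule.Quotient.mk (1 : A) := by
      rw [he_apply, hℓ_apply, one_smul]
    rw [← h1, e.symm_apply_apply]
  have hφJ : ∀ r : A, r ∈ Jk → φ r = 0 := by
    intro r hr
    rw [hφ_apply, (Submodule.Quotient.mk_eq_zero Jk).mpr hr, map_zero]
  -- the symmetric form
  obtain ⟨s, hs_comm, hs_faith⟩ := hsym
  -- s-orthogonality detects zero
  have hK : ∀ a : A, (∀ b : A, s (b * a) = 0) → a = 0 := by
    intro a ha
    set K : Ideal A :=
      { carrier := {x | ∀ b : A, s (b * x) = 0}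
        add_mem' := by
          intro x y hx hy b
          rw [mul_add, map_add, hx b, hy b, add_zero]
        zero_mem' := by intro b; rw [mul_zero, map_zero]
        smul_mem' := by
          intro c x hx b
          rw [smul_eq_mul, ← mul_assoc]
          exact hx (b * c) } with hKdef
    have hKbot : K = ⊥ := by
      apply hs_faith
      intro x hx
      have := hx 1
      rwa [one_mul] at this
    have haK : a ∈ K := ha
    rw [hKbot] at haK
    exact haK
  -- the linear map T : A → Dual A, T a = s (· * a), is bijective
  set T : A →ₗ[k] Module.Dual k A :=
    { toFun := fun a => s ∘ₗ LinearMap.mulRight k a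
      map_add' := by
        intro a b
        apply LinearMap.ext
        intro x
        simp [mul_add]
      map_smul' := by
        intro c a
        apply LinearMap.ext
        intro x
        simp [mul_smul_comm] } with hTdef
  have hT_apply : ∀ a b : A, T a b = s (b * a) := fun a b => rfl
  have hTinj : Function.Injective T := by
    intro a b hab
    have hT0 : T (a - b) = 0 := by rw [map_sub, hab, sub_self]
    have h0 : ∀ x : A, s (x * (a - b)) = 0 := by
      intro x
      calc s (x * (a - b)) = T (a - b) x := rfl
        _ = 0 := by rw [hT0]; rfl
    exact sub_eq_zero.mp (hK _ h0)
  have hTsurj : Function.Surjective T :=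
    (LinearMap.injective_iff_surjective_of_finrank_eq_finrank
      (Subspace.dual_finrank_eq (V := A)).symm).mp hTinj
  -- obtain the socle generator z
  obtain ⟨z, hz⟩ := hTsurj φ
  have hsz : ∀ b : A, s (b * z) = φ b := by
    intro b
    rw [← hT_apply, hz]
  have hsz1 : s z = 1 := by
    have := hsz 1
    rwa [one_mul, hφ1] at this
  have hJz : ∀ r : A, r ∈ J → r * z = 0 := by
    intro r hr
    apply hK
    intro b
    rw [← mul_assoc, hsz]
    exact hφJ _ (Ideal.mul_mem_left J b hr)
  have hzJ : ∀ r : A, r ∈ J → z * r = 0 := by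
    intro r hr
    apply hK
    intro b
    rw [← mul_assoc, hs_comm, ← mul_assoc, hsz]
    exact hφJ _ (aux_jacobson_mul_right hr b)
  have haz : ∀ a : A, a * z = φ a • z := by
    intro a
    have h1 : (a - φ a • (1:A)) * z = 0 := hJz _ (hφmem a)
    rw [sub_mul, smul_mul_assoc, one_mul, sub_eq_zero] at h1
    exact h1
  have hza : ∀ a : A, z * a = φ a • z := by
    intro a
    have h1 : z * (a - φ a • (1:A)) = 0 := hzJ _ (hφmem a)
    rw [mul_sub, mul_smul_comm, mul_one, sub_eq_zero] at h1
    exact h1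
  -- the subspace of functionals
  set U : Submodule k A := S ⊔ J2 with hUdef
  -- each functional in the annihilator gives a derivation
  have hder : ∀ α ∈ U.dualAnnihilator, IsDeriv k A (LinearMap.smulRight α z) := by
    intro α hα
    have hα' := (Submodule.mem_dualAnnihilator _).mp hα
    have hα1 : α (1 : A) = 0 :=
      hα' 1 (Submodule.mem_sup_left (Submodule.mem_span_singleton_self 1))
    intro a b
    have hprod : (a - φ a • (1:A)) * (b - φ b • (1:A)) ∈ U :=
      Submodule.mem_sup_right (Submodule.mul_mem_mul (hφmem a) (hφmem b))
    have h0 : α ((a - φ a • (1:A)) * (b - φ b • (1:A))) = 0 := hα' _ hprod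
    have expand : (a - φ a • (1:A)) * (b - φ b • (1:A)) =
        a * b - φ b • a - φ a • b + (φ a * φ b) • (1:A) := by
      simp only [sub_mul, mul_sub, smul_mul_assoc, mul_smul_comm, one_mul, mul_one, smul_smul,
        smul_sub]
      rw [mul_comm (φ b) (φ a)]
      abel
    rw [expand] at h0
    simp only [map_add, map_sub, map_smul, smul_eq_mul, hα1, mul_zero] at h0
    have hαab : α (a * b) = φ a * α b + φ b * α a := by linear_combination h0
    simp only [LinearMap.smulRight_apply]
    rw [mul_smul_comm, smul_mul_assoc, haz a, hza b, smul_smul, smul_smul, hαab, add_smul,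
      mul_comm (φ a), mul_comm (φ b)]
  -- the map into HH¹
  set D : U.dualAnnihilator →ₗ[k] Der k A := derMap k A z U hder with hDdef
  set G : U.dualAnnihilator →ₗ[k] HH1 k A := (IDer k A).toSubmodule.mkQ ∘ₗ D with hGdef
  have hG_apply : ∀ α : U.dualAnnihilator, G α = Submodule.Quotient.mk (D α) := fun _ => rfl
  -- the image lies in the socle
  have hrange : ∀ α : U.dualAnnihilator, G α ∈ socZHH1 k A := by
    intro α z' hz' hz'J
    have key : zmul k A z' hz' (D α) = 0 := by
      apply Subtype.ext
      apply LinearMap.ext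
      intro a
      show z' * (((D α : Der k A) : Module.End k A) a) = 0
      rw [hDdef, derMap_apply, mul_smul_comm, hJz z' hz'J, smul_zero]
    rw [hG_apply]
    show Submodule.mapQ _ _ (zmul k A z' hz') _ (Submodule.Quotient.mk (D α)) = 0
    rw [Submodule.mapQ_apply, key]
    exact Submodule.Quotient.mk_eq_zero _ |>.mpr (Submodule.zero_mem _)
  set G' : U.dualAnnihilator →ₗ[k] socZHH1 k A := G.codRestrict (socZHH1 k A) hrange with hG'def
  -- injectivity
  have hker : ∀ α : U.dualAnnihilator, G' α = 0 → α = 0 := by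
    intro α hα
    have hG0 : G α = 0 := congrArg Subtype.val hα
    rw [hG_apply, Submodule.Quotient.mk_eq_zero] at hG0
    obtain ⟨c, hc⟩ : IsInner k A ((D α : Der k A) : Module.End k A) := hG0
    have hαz : ∀ a : A, (α : Module.Dual k A) a = 0 := by
      intro a
      have hDa : ((D α : Der k A) : Module.End k A) a = (α : Module.Dual k A) a • z := rfl
      have h1 : s ((α : Module.Dual k A) a • z) = s (c * a - a * c) := by
        rw [← hDa, hc a]
      rw [map_smul, map_sub, hs_comm, sub_self, smul_eq_mul, hsz1, mul_one] at h1
      exact h1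
    exact Subtype.ext (LinearMap.ext hαz)
  have hG'inj : Function.Injective G' := by
    intro α β hαβ
    have h0 : G' (α - β) = 0 := by
      have hms := map_sub G' α β
      rw [hms, hαβ, sub_self]
    exact sub_eq_zero.mp (hker _ h0)
  -- finite-dimensionality bookkeeping
  haveI hDerFin : FiniteDimensional k (Der k A) :=
    FiniteDimensional.finiteDimensional_submodule (Der k A).toSubmodule
  haveI : FiniteDimensional k (HH1 k A) :=
    FiniteDimensional.finiteDimensional_quotient (IDer k A).toSubmodule
  have hWle : Module.finrank k U.dualAnnihilator ≤ Module.finrank k (socZHH1 k A) :=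
    LinearMap.finrank_le_finrank_of_injective hG'inj
  -- dimension count
  have e1 : Module.finrank k (A ⧸ U) = Module.finrank k U.dualAnnihilator :=
    LinearEquiv.finrank_eq (Subspace.quotEquivAnnihilator U)
  have e1b : Module.finrank k (A ⧸ U) + Module.finrank k U = Module.finrank k A :=
    Submodule.finrank_quotient_add_finrank U
  have hinf : S ⊓ J2 = ⊥ := by
    rw [eq_bot_iff]
    intro x hx
    have : x = 0 := hSJ x hx.1 (hJ2le hx.2)
    simp [this]
  have hS1 : Module.finrank k S = 1 := finrank_span_singleton hone
  have e2 : Module.finrank k U + Module.finrank k (S ⊓ J2 : Submodule k A) =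
      Module.finrank k S + Module.finrank k J2 :=
    Submodule.finrank_sup_add_finrank_inf_eq S J2
  rw [hinf, finrank_bot, add_zero, hS1] at e2
  have e4 : Module.finrank k (S ⊔ Jk : Submodule k A) +
      Module.finrank k (S ⊓ Jk : Submodule k A) =
      Module.finrank k S + Module.finrank k Jk :=
    Submodule.finrank_sup_add_finrank_inf_eq S Jk
  rw [hsup_top, hsl2, finrank_bot, add_zero, finrank_top, hS1] at e4
  have e5 : Module.finrank k
      (↥Jk ⧸ Submodule.comap Jk.subtype J2) +
      Module.finrank k (Submodule.comap Jk.subtype J2) = Module.finrank k Jk :=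
    Submodule.finrank_quotient_add_finrank _
  have e6 : Module.finrank k (Submodule.comap Jk.subtype J2) = Module.finrank k J2 :=
    LinearEquiv.finrank_eq (Submodule.comapSubtypeEquivOfLe hJ2le)
  omega
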